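/- Let 1 < α′ < α < 2 and let δ > α′ − 1. There exists an integer l₁* ≥ 2 such that for every integer l₁ ≥ l₁*, with the scales l_k defined by l₀ = 1 and l_k = ⌊l_{k−1}^{α−1}⌋·l_{k−1} for k ≥ 2, one has: (i) Σ_{k=2}^∞ l_{k−1}^{−δ} · ⌊ ⌊l_k^{α′/α}⌋ / l_{k−1} ⌋ ≤ Σ_{k=2}^∞ l_{k−1}^{−δ + α′ − 1} < ∞; and (ii) the infinite product ∏_{k=2}^∞ (1 − l_{k−1}^{−δ})^{⌊⌊l_k^{α′/α}⌋ / l_{k−1}⌋} converges to a strictly positive limit. -/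

import Mathlib

/-- The sequence of scales: `l₀ = 1`, `l₁` given, and `l_k = ⌊l_{k-1}^{α-1}⌋ · l_{k-1}`. -/
noncomputable def scaleSeq (α : ℝ) (l₁ : ℕ) : ℕ → ℕ
  | 0 => 1
  | 1 => l₁
  | (k + 2) => Nat.floor ((scaleSeq α l₁ (k + 1) : ℝ) ^ (α - 1)) * scaleSeq α l₁ (k + 1)

/-- For `δ > α' - 1` and `l₁` large enough:
(i) `Σ_{k≥2} l_{k-1}^{-δ} ⌊⌊l_k^{α'/α}⌋ / l_{k-1}⌋ ≤ Σ_{k≥2} l_{k-1}^{-δ+α'-1} < ∞`, and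
(ii) `∏_{k≥2} (1 - l_{k-1}^{-δ})^{⌊⌊l_k^{α'/α}⌋ / l_{k-1}⌋}` converges to a positive limit.
(Sums and products are indexed by `k = j + 2`, `j : ℕ`.) -/
theorem scale_series_and_product (α α' δ : ℝ) (h1 : 1 < α') (h2 : α' < α) (h3 : α < 2)
    (hδ : α' - 1 < δ) :
    ∃ l₁star : ℕ, 2 ≤ l₁star ∧ ∀ l₁ : ℕ, l₁star ≤ l₁ →
      (Summable (fun j : ℕ =>
          (scaleSeq α l₁ (j + 1) : ℝ) ^ (-δ) *
            ((Nat.floor ((scaleSeq α l₁ (j + 2) : ℝ) ^ (α' / α)) / scaleSeq α l₁ (j + 1) : ℕ)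
              : ℝ)) ∧
       Summable (fun j : ℕ => (scaleSeq α l₁ (j + 1) : ℝ) ^ (-δ + α' - 1)) ∧
       (∑' j : ℕ,
          (scaleSeq α l₁ (j + 1) : ℝ) ^ (-δ) *
            ((Nat.floor ((scaleSeq α l₁ (j + 2) : ℝ) ^ (α' / α)) / scaleSeq α l₁ (j + 1) : ℕ)
              : ℝ)) ≤
         ∑' j : ℕ, (scaleSeq α l₁ (j + 1) : ℝ) ^ (-δ + α' - 1)) ∧
      (Multipliable (fun j : ℕ =>
          (1 - (scaleSeq α l₁ (j + 1) : ℝ) ^ (-δ)) ^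
            (Nat.floor ((scaleSeq α l₁ (j + 2) : ℝ) ^ (α' / α)) / scaleSeq α l₁ (j + 1))) ∧
       0 < ∏' j : ℕ,
          (1 - (scaleSeq α l₁ (j + 1) : ℝ) ^ (-δ)) ^
            (Nat.floor ((scaleSeq α l₁ (j + 2) : ℝ) ^ (α' / α)) / scaleSeq α l₁ (j + 1))) := by
  have hα1 : 1 < α := h1.trans h2
  have hα0 : 0 < α - 1 := by linarith
  have hδ0 : 0 < δ := by linarith
  have hε0 : 0 < δ - α' + 1 := by linarith
  set ε : ℝ := δ - α' + 1 with hεdef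
  obtain ⟨N, hN⟩ := exists_nat_ge (max ((2:ℝ) ^ ((α-1)⁻¹)) ((2:ℝ) ^ δ⁻¹))
  have hpowα : ∀ x : ℝ, (N : ℝ) ≤ x → 2 ≤ x ^ (α - 1) := by
    intro x hx
    have h2x : (2:ℝ) ^ ((α-1)⁻¹) ≤ x := le_trans (le_max_left _ _) (hN.trans hx)
    calc (2:ℝ) = ((2:ℝ) ^ ((α-1)⁻¹)) ^ (α - 1) := by
          rw [← Real.rpow_mul (by norm_num), inv_mul_cancel₀ (ne_of_gt hα0), Real.rpow_one]
      _ ≤ x ^ (α - 1) :=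
          Real.rpow_le_rpow (Real.rpow_nonneg (by norm_num) _) h2x hα0.le
  have hpowδ : ∀ x : ℝ, (N : ℝ) ≤ x → 2 ≤ x ^ δ := by
    intro x hx
    have h2x : (2:ℝ) ^ (δ⁻¹) ≤ x := le_trans (le_max_right _ _) (hN.trans hx)
    calc (2:ℝ) = ((2:ℝ) ^ (δ⁻¹)) ^ δ := by
          rw [← Real.rpow_mul (by norm_num), inv_mul_cancel₀ (ne_of_gt hδ0), Real.rpow_one]
      _ ≤ x ^ δ := Real.rpow_le_rpow (Real.rpow_nonneg (by norm_num) _) h2x hδ0.le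
  refine ⟨max 2 N, le_max_left _ _, ?_⟩
  intro l₁ hl₁
  set L : ℕ → ℕ := scaleSeq α l₁ with hL
  have hrec : ∀ k : ℕ, L (k + 2) = Nat.floor ((L (k+1) : ℝ) ^ (α - 1)) * L (k+1) :=
    fun k => rfl
  have hl2 : 2 ≤ l₁ := le_trans (le_max_left _ _) hl₁
  have hlN : (N : ℝ) ≤ (l₁ : ℝ) := by
    exact_mod_cast le_trans (le_max_right 2 N) hl₁
  -- monotone lower bound
  have LA : ∀ k : ℕ, l₁ ≤ L (k + 1) := by
    intro k
    induction k with
    | zero => exact le_refl _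
    | succ k ih =>
      rw [hrec]
      have hx1 : (1:ℝ) ≤ (L (k+1) : ℝ) := by
        have : (1:ℕ) ≤ L (k+1) := le_trans (by omega) ih
        exact_mod_cast this
      have hfl : 1 ≤ Nat.floor ((L (k+1) : ℝ) ^ (α - 1)) := by
        apply Nat.le_floor
        calc ((1:ℕ) : ℝ) = (L (k+1) : ℝ) ^ (0:ℝ) := by rw [Real.rpow_zero]; norm_num
          _ ≤ (L (k+1) : ℝ) ^ (α - 1) :=
            Real.rpow_le_rpow_of_exponent_le hx1 hα0.le
      calc l₁ ≤ L (k+1) := ih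
        _ = 1 * L (k+1) := (one_mul _).symm
        _ ≤ Nat.floor ((L (k+1) : ℝ) ^ (α - 1)) * L (k+1) :=
            Nat.mul_le_mul_right _ hfl
  have LN : ∀ k : ℕ, (N : ℝ) ≤ (L (k + 1) : ℝ) := by
    intro k
    refine hlN.trans ?_
    exact_mod_cast LA k
  have hLpos : ∀ k : ℕ, (0:ℝ) < (L (k + 1) : ℝ) := by
    intro k
    have : 2 ≤ L (k+1) := le_trans hl2 (LA k)
    exact_mod_cast lt_of_lt_of_le (by norm_num : (0:ℕ) < 2) this
  -- doubling
  have LB : ∀ k : ℕ, 2 * L (k + 1) ≤ L (k + 2) := by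
    intro k
    rw [hrec]
    have hfl : 2 ≤ Nat.floor ((L (k+1) : ℝ) ^ (α - 1)) := by
      apply Nat.le_floor
      exact_mod_cast hpowα _ (LN k)
    exact Nat.mul_le_mul_right _ hfl
  have LC : ∀ j : ℕ, (2:ℝ) ^ (j + 1) ≤ (L (j + 1) : ℝ) := by
    intro j
    induction j with
    | zero =>
      show (2:ℝ) ^ (0 + 1) ≤ (l₁ : ℝ)
      simpa using (by exact_mod_cast hl2 : (2:ℝ) ≤ (l₁ : ℝ))
    | succ j ih =>
      have := LB j
      have hcast : 2 * (L (j+1) : ℝ) ≤ (L (j+2) : ℝ) := by exact_mod_cast this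
      calc (2:ℝ) ^ (j + 2) = 2 * 2 ^ (j+1) := by ring
        _ ≤ 2 * (L (j+1) : ℝ) := by linarith
        _ ≤ (L (j+2) : ℝ) := hcast
  -- upper bound l_{k+1} ≤ l_k ^ α
  have LD : ∀ k : ℕ, (L (k + 2) : ℝ) ≤ (L (k + 1) : ℝ) ^ α := by
    intro k
    rw [hrec]
    push_cast
    have hx := hLpos k
    calc (⌊(L (k+1) : ℝ) ^ (α - 1)⌋₊ : ℝ) * (L (k+1) : ℝ)
        ≤ (L (k+1) : ℝ) ^ (α - 1) * (L (k+1) : ℝ) :=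
          mul_le_mul_of_nonneg_right (Nat.floor_le (Real.rpow_nonneg hx.le _)) hx.le
      _ = (L (k+1) : ℝ) ^ α := by
          rw [← Real.rpow_add_one (ne_of_gt hx)]; ring_nf
  -- key per-term bound
  have LE : ∀ j : ℕ,
      ((Nat.floor ((L (j + 2) : ℝ) ^ (α' / α)) / L (j + 1) : ℕ) : ℝ)
        ≤ (L (j + 1) : ℝ) ^ (α' - 1) := by
    intro j
    have hx := hLpos j
    have h1 : ((Nat.floor ((L (j + 2) : ℝ) ^ (α' / α)) / L (j + 1) : ℕ) : ℝ)
        ≤ (Nat.floor ((L (j + 2) : ℝ) ^ (α' / α)) : ℝ) / (L (j + 1) : ℝ) :=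
      Nat.cast_div_le
    have h2 : (Nat.floor ((L (j + 2) : ℝ) ^ (α' / α)) : ℝ) ≤ (L (j + 2) : ℝ) ^ (α' / α) :=
      Nat.floor_le (Real.rpow_nonneg (Nat.cast_nonneg _) _)
    have h3 : (L (j + 2) : ℝ) ^ (α' / α) ≤ (L (j + 1) : ℝ) ^ α' := by
      calc (L (j + 2) : ℝ) ^ (α' / α) ≤ ((L (j + 1) : ℝ) ^ α) ^ (α' / α) :=
            Real.rpow_le_rpow (Nat.cast_nonneg _) (LD j)
              (div_nonneg (by linarith) (by linarith))
        _ = (L (j + 1) : ℝ) ^ α' := by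
            rw [← Real.rpow_mul hx.le]
            congr 1
            field_simp
    calc ((Nat.floor ((L (j + 2) : ℝ) ^ (α' / α)) / L (j + 1) : ℕ) : ℝ)
        ≤ (Nat.floor ((L (j + 2) : ℝ) ^ (α' / α)) : ℝ) / (L (j + 1) : ℝ) := h1
      _ ≤ (L (j + 1) : ℝ) ^ α' / (L (j + 1) : ℝ) := by
          gcongr
          exact h2.trans h3
      _ = (L (j + 1) : ℝ) ^ (α' - 1) := by
          rw [Real.rpow_sub hx, Real.rpow_one]
  -- comparison function g and its summability
  have hgle : ∀ j : ℕ, (L (j + 1) : ℝ) ^ (-δ + α' - 1) ≤ ((2:ℝ) ^ (-ε)) ^ j := by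
    intro j
    have hx := hLpos j
    have hexp : -δ + α' - 1 = -ε := by rw [hεdef]; ring
    rw [hexp]
    have h2pos : (0:ℝ) < (2:ℝ) ^ (j + 1) := by positivity
    have hmono : ((2:ℝ) ^ (j + 1)) ^ (-ε) ≤ ((2:ℝ) ^ (-ε)) ^ j := by
      have : ((2:ℝ) ^ (j + 1)) ^ (-ε) = ((2:ℝ) ^ (-ε)) ^ (j + 1) := by
        rw [← Real.rpow_natCast (2:ℝ) (j+1), ← Real.rpow_mul (by norm_num),
          ← Real.rpow_natCast ((2:ℝ) ^ (-ε)) (j+1), ← Real.rpow_mul (by norm_num)]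
        congr 1
        ring
      rw [this, pow_succ]
      have hr1 : (2:ℝ) ^ (-ε) ≤ 1 :=
        le_of_lt (Real.rpow_lt_one_of_one_lt_of_neg (by norm_num) (by linarith))
      have hr0 : (0:ℝ) ≤ (2:ℝ) ^ (-ε) := Real.rpow_nonneg (by norm_num) _
      exact mul_le_of_le_one_right (pow_nonneg hr0 _) hr1
    refine le_trans ?_ hmono
    rw [Real.rpow_neg hx.le, Real.rpow_neg h2pos.le]
    gcongr
    exact LC j
  have r0 : (0:ℝ) ≤ (2:ℝ) ^ (-ε) := Real.rpow_nonneg (by norm_num) _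
  have r1 : (2:ℝ) ^ (-ε) < 1 := Real.rpow_lt_one_of_one_lt_of_neg (by norm_num) (by linarith)
  have hgnn : ∀ j : ℕ, (0:ℝ) ≤ (L (j + 1) : ℝ) ^ (-δ + α' - 1) :=
    fun j => Real.rpow_nonneg (Nat.cast_nonneg _) _
  have hgsum : Summable (fun j : ℕ => (L (j + 1) : ℝ) ^ (-δ + α' - 1)) :=
    Summable.of_nonneg_of_le hgnn hgle (summable_geometric_of_lt_one r0 r1)
  -- f ≤ g
  have hfg : ∀ j : ℕ,
      (L (j + 1) : ℝ) ^ (-δ) *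
          ((Nat.floor ((L (j + 2) : ℝ) ^ (α' / α)) / L (j + 1) : ℕ) : ℝ)
        ≤ (L (j + 1) : ℝ) ^ (-δ + α' - 1) := by
    intro j
    have hx := hLpos j
    calc (L (j + 1) : ℝ) ^ (-δ) *
          ((Nat.floor ((L (j + 2) : ℝ) ^ (α' / α)) / L (j + 1) : ℕ) : ℝ)
        ≤ (L (j + 1) : ℝ) ^ (-δ) * (L (j + 1) : ℝ) ^ (α' - 1) :=
          mul_le_mul_of_nonneg_left (LE j) (Real.rpow_nonneg hx.le _)
      _ = (L (j + 1) : ℝ) ^ (-δ + α' - 1) := by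
          rw [← Real.rpow_add hx]
          ring_nf
  have hfnn : ∀ j : ℕ, (0:ℝ) ≤ (L (j + 1) : ℝ) ^ (-δ) *
      ((Nat.floor ((L (j + 2) : ℝ) ^ (α' / α)) / L (j + 1) : ℕ) : ℝ) := by
    intro j
    exact mul_nonneg (Real.rpow_nonneg (Nat.cast_nonneg _) _) (Nat.cast_nonneg _)
  have hfsum : Summable (fun j : ℕ => (L (j + 1) : ℝ) ^ (-δ) *
      ((Nat.floor ((L (j + 2) : ℝ) ^ (α' / α)) / L (j + 1) : ℕ) : ℝ)) :=
    Summable.of_nonneg_of_le hfnn hfg hgsum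
  -- x_j ≤ 1/2
  have hxpos : ∀ j : ℕ, (0:ℝ) < (L (j + 1) : ℝ) ^ (-δ) :=
    fun j => Real.rpow_pos_of_pos (hLpos j) _
  have hxhalf : ∀ j : ℕ, (L (j + 1) : ℝ) ^ (-δ) ≤ 1 / 2 := by
    intro j
    have h2 : (2:ℝ) ≤ (L (j + 1) : ℝ) ^ δ := hpowδ _ (LN j)
    rw [Real.rpow_neg (hLpos j).le, ← one_div]
    exact (one_div_le_one_div_of_le (by norm_num) h2)
  -- log bound
  have hlogb : ∀ x : ℝ, 0 < x → x ≤ 1/2 → -Real.log (1 - x) ≤ 2 * x := by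
    intro x hx hx2
    have h1x : (0:ℝ) < 1 - x := by linarith
    have hlog := Real.log_le_sub_one_of_pos (inv_pos.2 h1x)
    rw [Real.log_inv] at hlog
    have hinv : (1 - x)⁻¹ ≤ 2 := by
      rw [← one_div]
      calc (1:ℝ) / (1 - x) ≤ 1 / (1/2) := one_div_le_one_div_of_le (by norm_num) (by linarith)
        _ = 2 := by norm_num
    have key : (1 - x)⁻¹ * (1 - x) = 1 := inv_mul_cancel₀ (ne_of_gt h1x)
    nlinarith [mul_le_mul_of_nonneg_left hinv hx.le, hlog, key]
  -- summability of the logs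
  set c : ℕ → ℝ := fun j =>
    ((Nat.floor ((L (j + 2) : ℝ) ^ (α' / α)) / L (j + 1) : ℕ) : ℝ) *
      Real.log (1 - (L (j + 1) : ℝ) ^ (-δ)) with hcdef
  have hcsum : Summable c := by
    refine Summable.of_abs ?_
    refine Summable.of_nonneg_of_le (fun j => abs_nonneg _)
      (fun j => ?_) (hgsum.mul_left 2)
    have hx := hxpos j
    have hxh := hxhalf j
    have h1x : (0:ℝ) < 1 - (L (j + 1) : ℝ) ^ (-δ) := by linarith
    rw [hcdef, abs_mul, Nat.abs_cast,
      abs_of_nonpos (Real.log_nonpos (by linarith) (by linarith))]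
    calc ((Nat.floor ((L (j + 2) : ℝ) ^ (α' / α)) / L (j + 1) : ℕ) : ℝ) *
          (-Real.log (1 - (L (j + 1) : ℝ) ^ (-δ)))
        ≤ ((Nat.floor ((L (j + 2) : ℝ) ^ (α' / α)) / L (j + 1) : ℕ) : ℝ) *
          (2 * (L (j + 1) : ℝ) ^ (-δ)) :=
          mul_le_mul_of_nonneg_left (hlogb _ hx hxh) (Nat.cast_nonneg _)
      _ = 2 * ((L (j + 1) : ℝ) ^ (-δ) *
            ((Nat.floor ((L (j + 2) : ℝ) ^ (α' / α)) / L (j + 1) : ℕ) : ℝ)) := by ring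
      _ ≤ 2 * (L (j + 1) : ℝ) ^ (-δ + α' - 1) := by
          have := hfg j
          linarith
  -- product via exp
  have hp : HasProd (Real.exp ∘ c) (Real.exp (∑' j, c j)) := hcsum.hasSum.rexp
  have heq : (Real.exp ∘ c) = fun j : ℕ =>
      (1 - (L (j + 1) : ℝ) ^ (-δ)) ^
        (Nat.floor ((L (j + 2) : ℝ) ^ (α' / α)) / L (j + 1)) := by
    funext j
    have hx := hxpos j
    have hxh := hxhalf j
    have h1x : (0:ℝ) < 1 - (L (j + 1) : ℝ) ^ (-δ) := by linarith
    simp only [Function.comp_apply, hcdef]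
    rw [Real.exp_nat_mul, Real.exp_log h1x]
  rw [heq] at hp
  exact ⟨⟨hfsum, hgsum, Summable.tsum_le_tsum hfg hfsum hgsum⟩,
    hp.multipliable, hp.tprod_eq ▸ Real.exp_pos _⟩
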